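/- Let $\gamma \notin H_X$. The $\omega$-invariant pair $(X, H_X \cup \{\gamma\})$ is prime if and only if $X = \gamma + \overline{\mathrm{sg}}(\omega)$. -/

import Mathlib

open Set Filter Topology

variable {Γ : Type*}

/-- The translate `X + g` of a set. -/
def trSet [Add Γ] (X : Set Γ) (g : Γ) : Set Γ := (fun x => x + g) '' X

/-- `X` is ω-invariant: closed and `X + ω i ⊆ X` for all `i ≥ 1`. -/
def OmegaInv [Add Γ] [TopologicalSpace Γ] (ω : ℕ → Γ) (X : Set Γ) : Prop :=
  IsClosed X ∧ ∀ i, 1 ≤ i → trSet X (ω i) ⊆ X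

/-- The set `H_X`. -/
def HX [Add Γ] [TopologicalSpace Γ] (ω : ℕ → Γ) (X : Set Γ) : Set Γ :=
  closure (X \ ⋃ i ≥ 1, trSet X (ω i)) ∪
    ⋂ n ≥ 1, closure (⋃ i ≥ n, trSet X (ω i))

/-- An ω-invariant pair `(X, X^∞)`. -/
def OmegaInvPair [Add Γ] [TopologicalSpace Γ] (ω : ℕ → Γ) (X Xinf : Set Γ) : Prop :=
  OmegaInv ω X ∧ IsClosed Xinf ∧ HX ω X ⊆ Xinf ∧ Xinf ⊆ X

/-- The set `X^{(n)} = X^∞ ∪ ⋃_{i ≥ n+1} (X + ω_i)`. -/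
def Xn [Add Γ] [TopologicalSpace Γ] (ω : ℕ → Γ) (X Xinf : Set Γ) (n : ℕ) : Set Γ :=
  Xinf ∪ ⋃ i ≥ n + 1, trSet X (ω i)

/-- A word: a finite list of positive integers. -/
def IsWord (μ : List ℕ) : Prop := ∀ i ∈ μ, 1 ≤ i

/-- A word with letters in `{1, …, n}`. -/
def IsWordLe (n : ℕ) (μ : List ℕ) : Prop := ∀ i ∈ μ, 1 ≤ i ∧ i ≤ n

/-- `ω_μ`, the sum of `ω i` over the letters of `μ`. -/
def wsum [AddCommMonoid Γ] (ω : ℕ → Γ) (μ : List ℕ) : Γ := (μ.map ω).sum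

/-- The semigroup (with 0) generated by the `ω_i`. -/
def sgSet [AddCommMonoid Γ] (ω : ℕ → Γ) : Set Γ :=
  {γ | ∃ μ : List ℕ, IsWord μ ∧ γ = wsum ω μ}

/-- Primeness condition for an ω-invariant set. -/
def PrimeCond [Add Γ] [TopologicalSpace Γ] (ω : ℕ → Γ) (X : Set Γ) : Prop :=
  ∀ X1 X2 : Set Γ, OmegaInv ω X1 → OmegaInv ω X2 → X ⊆ X1 ∪ X2 → X ⊆ X1 ∨ X ⊆ X2

/-- Primeness condition for an ω-invariant pair (componentwise inclusion/union). -/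
def PrimePair [Add Γ] [TopologicalSpace Γ] (ω : ℕ → Γ) (X Xinf : Set Γ) : Prop :=
  ∀ X1 X1i X2 X2i : Set Γ, OmegaInvPair ω X1 X1i → OmegaInvPair ω X2 X2i →
    X ⊆ X1 ∪ X2 → Xinf ⊆ X1i ∪ X2i →
    (X ⊆ X1 ∧ Xinf ⊆ X1i) ∨ (X ⊆ X2 ∧ Xinf ⊆ X2i)

section Aux

variable [AddCommGroup Γ] [TopologicalSpace Γ] [IsTopologicalAddGroup Γ]

lemma trSet_mono {X Y : Set Γ} (h : X ⊆ Y) (g : Γ) : trSet X g ⊆ trSet Y g :=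
  Set.image_mono h

lemma isClosed_trSet {X : Set Γ} (h : IsClosed X) (g : Γ) : IsClosed (trSet X g) := by
  have := (Homeomorph.addRight g).isClosedMap X h
  simpa [trSet, Homeomorph.addRight] using this

lemma isClosed_HX (ω : ℕ → Γ) (X : Set Γ) : IsClosed (HX ω X) := by
  unfold HX
  exact isClosed_closure.union (isClosed_biInter fun n _ => isClosed_closure)

lemma HX_subset {ω : ℕ → Γ} {X : Set Γ} (h : OmegaInv ω X) : HX ω X ⊆ X := by
  unfold HX
  apply Set.union_subset
  · calc closure (X \ ⋃ i ≥ 1, trSet X (ω i)) ⊆ closure X := closure_mono Set.diff_subset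
      _ = X := h.1.closure_eq
  · intro x hx
    have hx1 : x ∈ closure (⋃ i ≥ 1, trSet X (ω i)) := by
      have := Set.mem_iInter₂.mp hx 1 le_rfl
      exact this
    have hsub : (⋃ i ≥ 1, trSet X (ω i)) ⊆ X := Set.iUnion₂_subset fun i hi => h.2 i hi
    exact h.1.closure_subset_iff.mpr hsub hx1

lemma tail_mono {ω : ℕ → Γ} {X Y : Set Γ} (hXY : X ⊆ Y) :
    (⋂ n ≥ 1, closure (⋃ i ≥ n, trSet X (ω i))) ⊆
      ⋂ n ≥ 1, closure (⋃ i ≥ n, trSet Y (ω i)) :=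
  Set.iInter₂_mono fun _ _ =>
    closure_mono (Set.iUnion₂_mono fun i _ => trSet_mono hXY (ω i))

lemma zero_mem_sgSet (ω : ℕ → Γ) : (0 : Γ) ∈ sgSet ω :=
  ⟨[], fun i hi => absurd hi List.not_mem_nil, rfl⟩

lemma wsum_cons (ω : ℕ → Γ) (i : ℕ) (μ : List ℕ) :
    wsum ω (i :: μ) = ω i + wsum ω μ := by
  simp [wsum]

lemma add_mem_sgSet {ω : ℕ → Γ} {s : Γ} (hs : s ∈ sgSet ω) {i : ℕ} (hi : 1 ≤ i) :
    s + ω i ∈ sgSet ω := by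
  obtain ⟨μ, hμ, rfl⟩ := hs
  refine ⟨i :: μ, ?_, ?_⟩
  · intro j hj
    rcases List.mem_cons.mp hj with rfl | hj
    · exact hi
    · exact hμ j hj
  · rw [wsum_cons, add_comm]

/-- If `X1` is ω-invariant and contains `γ`, it contains `γ + sg`. -/
lemma add_sg_subset {ω : ℕ → Γ} {X1 : Set Γ} (h1 : OmegaInv ω X1) {γ : Γ} (hγ : γ ∈ X1) :
    (fun s => γ + s) '' sgSet ω ⊆ X1 := by
  rintro _ ⟨s, ⟨μ, hμ, rfl⟩, rfl⟩
  induction μ with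
  | nil => simpa [wsum] using hγ
  | cons i μ ih =>
    have hi : 1 ≤ i := hμ i List.mem_cons_self
    have hμ' : IsWord μ := fun j hj => hμ j (List.mem_cons_of_mem i hj)
    have hx : γ + wsum ω μ ∈ X1 := ih hμ'
    show γ + wsum ω (i :: μ) ∈ X1
    have heq : γ + wsum ω (i :: μ) = (γ + wsum ω μ) + ω i := by
      rw [wsum_cons]; abel
    rw [heq]
    exact h1.2 i hi ⟨_, hx, rfl⟩

lemma image_closure_addLeft (γ : Γ) (S : Set Γ) :
    (fun s => γ + s) '' closure S = closure ((fun s => γ + s) '' S) := by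
  have := (Homeomorph.addLeft γ).image_closure S
  simpa [Homeomorph.addLeft] using this

/-- If `X1` is ω-invariant and contains `γ`, it contains `γ + closure sg`. -/
lemma add_clsg_subset {ω : ℕ → Γ} {X1 : Set Γ} (h1 : OmegaInv ω X1) {γ : Γ} (hγ : γ ∈ X1) :
    (fun s => γ + s) '' closure (sgSet ω) ⊆ X1 := by
  rw [image_closure_addLeft]
  exact h1.1.closure_subset_iff.mpr (add_sg_subset h1 hγ)

lemma omegaInv_clsg (ω : ℕ → Γ) (γ : Γ) :
    OmegaInv ω ((fun s => γ + s) '' closure (sgSet ω)) := by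
  constructor
  · have : IsClosed ((Homeomorph.addLeft γ) '' closure (sgSet ω)) :=
      (Homeomorph.addLeft γ).isClosedMap _ isClosed_closure
    simpa [Homeomorph.addLeft] using this
  · rintro i hi _ ⟨_, ⟨s, hs, rfl⟩, rfl⟩
    refine ⟨s + ω i, ?_, by exact (add_assoc γ s (ω i)).symm⟩
    have : (fun t => t + ω i) s ∈ closure (sgSet ω) :=
      map_mem_closure (f := fun t => t + ω i) (continuous_add_right (ω i)) hs
        (fun t ht => add_mem_sgSet ht hi)
    exact this

lemma gamma_mem_clsg (ω : ℕ → Γ) (γ : Γ) :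
    γ ∈ (fun s => γ + s) '' closure (sgSet ω) :=
  ⟨0, subset_closure (zero_mem_sgSet ω), add_zero γ⟩

variable [T2Space Γ]

/-- Splitting the closure of the union of translates. -/
lemma closure_union_tr {ω : ℕ → Γ} {X : Set Γ} (hX : IsClosed X) :
    closure (⋃ i ≥ 1, trSet X (ω i)) ⊆
      (⋃ i ≥ 1, trSet X (ω i)) ∪ ⋂ n ≥ 1, closure (⋃ i ≥ n, trSet X (ω i)) := by
  intro x hx
  by_cases h : x ∈ ⋂ n ≥ 1, closure (⋃ i ≥ n, trSet X (ω i))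
  · exact Or.inr h
  · left
    rw [Set.mem_iInter₂] at h
    push_neg at h
    obtain ⟨n, hn, hxn⟩ := h
    have hsplit : (⋃ i ≥ 1, trSet X (ω i)) ⊆
        (⋃ i ∈ Set.Ico 1 n, trSet X (ω i)) ∪ ⋃ i ≥ n, trSet X (ω i) := by
      intro y hy
      obtain ⟨i, hi, hyi⟩ := Set.mem_iUnion₂.mp hy
      rcases lt_or_ge i n with hlt | hge
      · exact Or.inl (Set.mem_iUnion₂.mpr ⟨i, ⟨hi, hlt⟩, hyi⟩)
      · exact Or.inr (Set.mem_iUnion₂.mpr ⟨i, hge, hyi⟩)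
    have hmem := closure_mono hsplit hx
    rw [closure_union] at hmem
    rcases hmem with h1 | h2
    · have hfin : IsClosed (⋃ i ∈ Set.Ico 1 n, trSet X (ω i)) :=
        (Set.finite_Ico 1 n).isClosed_biUnion fun i _ => isClosed_trSet hX (ω i)
      rw [hfin.closure_eq] at h1
      obtain ⟨i, ⟨hi1, _⟩, hyi⟩ := Set.mem_iUnion₂.mp h1
      exact Set.mem_iUnion₂.mpr ⟨i, hi1, hyi⟩
    · exact absurd h2 hxn

/-- The key lemma: if `X = γ + closure sg` and `(X1, X1i)` is an ω-invariant pair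
with `γ ∈ X1i`, then `X ⊆ X1` and `HX ω X ∪ {γ} ⊆ X1i`. -/
lemma key_lemma {ω : ℕ → Γ} {X X1 X1i : Set Γ} {γ : Γ}
    (hp1 : OmegaInvPair ω X1 X1i) (hγ1 : γ ∈ X1i)
    (hXeq : X = (fun s => γ + s) '' closure (sgSet ω)) :
    X ⊆ X1 ∧ HX ω X ∪ {γ} ⊆ X1i := by
  have hγX1 : γ ∈ X1 := hp1.2.2.2 hγ1
  have hXX1 : X ⊆ X1 := hXeq ▸ add_clsg_subset hp1.1 hγX1
  refine ⟨hXX1, ?_⟩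
  have hXinv : OmegaInv ω X := hXeq ▸ omegaInv_clsg ω γ
  -- the tail part of HX ω X lands in X1i
  have htail : (⋂ n ≥ 1, closure (⋃ i ≥ n, trSet X (ω i))) ⊆ X1i := by
    intro x hx
    have : x ∈ HX ω X1 := Or.inr (tail_mono hXX1 hx)
    exact hp1.2.2.1 this
  -- X is contained in {γ} ∪ closure of union of translates
  have hcov : X ⊆ {γ} ∪ closure (⋃ i ≥ 1, trSet X (ω i)) := by
    have hsg : (fun s => γ + s) '' sgSet ω ⊆ {γ} ∪ ⋃ i ≥ 1, trSet X (ω i) := by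
      rintro _ ⟨s, ⟨μ, hμ, rfl⟩, rfl⟩
      cases μ with
      | nil => left; simp [wsum]
      | cons i μ' =>
        right
        have hi : 1 ≤ i := hμ i List.mem_cons_self
        have hμ' : IsWord μ' := fun j hj => hμ j (List.mem_cons_of_mem i hj)
        have hx' : γ + wsum ω μ' ∈ X := by
          rw [hXeq]
          exact ⟨wsum ω μ', subset_closure ⟨μ', hμ', rfl⟩, rfl⟩
        have heq : γ + wsum ω (i :: μ') = (γ + wsum ω μ') + ω i := by
          rw [wsum_cons]; abel
        exact Set.mem_iUnion₂.mpr ⟨i, hi, ⟨γ + wsum ω μ', hx', heq.symm⟩⟩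
    have hcl : IsClosed ({γ} ∪ closure (⋃ i ≥ 1, trSet X (ω i)) : Set Γ) :=
      isClosed_singleton.union isClosed_closure
    calc X = (fun s => γ + s) '' closure (sgSet ω) := hXeq
      _ = closure ((fun s => γ + s) '' sgSet ω) := image_closure_addLeft γ _
      _ ⊆ {γ} ∪ closure (⋃ i ≥ 1, trSet X (ω i)) := hcl.closure_subset_iff.mpr
          (hsg.trans (Set.union_subset_union_right _ subset_closure))
  -- hence the head part of HX lands in {γ} ∪ tail
  have hhead : closure (X \ ⋃ i ≥ 1, trSet X (ω i)) ⊆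
      ({γ} : Set Γ) ∪ ⋂ n ≥ 1, closure (⋃ i ≥ n, trSet X (ω i)) := by
    have hcl : IsClosed (({γ} : Set Γ) ∪ ⋂ n ≥ 1, closure (⋃ i ≥ n, trSet X (ω i))) :=
      isClosed_singleton.union (isClosed_biInter fun n _ => isClosed_closure)
    refine hcl.closure_subset_iff.mpr ?_
    rintro x ⟨hxX, hxU⟩
    rcases hcov hxX with hγx | hxcl
    · exact Or.inl hγx
    · rcases closure_union_tr hXinv.1 hxcl with hU | hT
      · exact absurd hU hxU
      · exact Or.inr hT
  intro x hx
  rcases hx with hH | hγx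
  · rcases hH with h1 | h2
    · rcases hhead h1 with hγx | ht
      · exact hγx ▸ hγ1
      · exact htail ht
    · exact htail h2
  · exact hγx ▸ hγ1

end Aux

theorem stmt8 [AddCommGroup Γ] [TopologicalSpace Γ] [IsTopologicalAddGroup Γ]
    [LocallyCompactSpace Γ] [SecondCountableTopology Γ] [T2Space Γ]
    (ω : ℕ → Γ) (X : Set Γ) (γ : Γ) (hX : OmegaInv ω X) (hγ : γ ∉ HX ω X)
    (hpair : OmegaInvPair ω X (HX ω X ∪ {γ})) :
    PrimePair ω X (HX ω X ∪ {γ}) ↔ X = (fun s => γ + s) '' closure (sgSet ω) := by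
  set B : Set Γ := (fun s => γ + s) '' closure (sgSet ω) with hB
  have hγX : γ ∈ X := hpair.2.2.2 (Or.inr rfl)
  have hBX : B ⊆ X := add_clsg_subset hX hγX
  constructor
  · intro hP
    have hpB : OmegaInvPair ω B B :=
      ⟨omegaInv_clsg ω γ, (omegaInv_clsg ω γ).1, HX_subset (omegaInv_clsg ω γ),
        subset_rfl⟩
    have hpX : OmegaInvPair ω X (HX ω X) :=
      ⟨hX, isClosed_HX ω X, subset_rfl, HX_subset hX⟩
    have h1 : X ⊆ B ∪ X := fun x hx => Or.inr hx
    have h2 : HX ω X ∪ {γ} ⊆ B ∪ HX ω X := by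
      rintro x (hH | hγx)
      · exact Or.inr hH
      · exact Or.inl (hγx ▸ gamma_mem_clsg ω γ)
    rcases hP B B X (HX ω X) hpB hpX h1 h2 with ⟨hXB, _⟩ | ⟨_, hXi⟩
    · exact le_antisymm hXB hBX
    · exact absurd (hXi (Or.inr rfl)) hγ
  · intro hXeq X1 X1i X2 X2i hp1 hp2 _ hsubi
    rcases hsubi (Or.inr rfl) with hγ1 | hγ2
    · exact Or.inl (key_lemma hp1 hγ1 hXeq)
    · exact Or.inr (key_lemma hp2 hγ2 hXeq)
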